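/- Let (Ω, F, P) be a probability space with a filtration (F_t)_{t∈ℕ}, and let Q_1(t), …, Q_N(t) be nonnegative real-valued stochastic processes adapted to (F_t) with E[Q_n(t)²] < ∞ for all n and t. Define the Lyapunov function L(t) = (1/2) Σ_{n=1}^N Q_n(t)² and the Lyapunov drift Δ(t) = E[L(t+1) − L(t) | F_t]. If there exist constants B ≥ 0 and ε > 0 such that Δ(t) ≤ B − ε Σ_{n=1}^N Q_n(t) almost surely for every t ∈ ℕ, then limsup_{τ→∞} (1/τ) Σ_{t=1}^{τ} Σ_{n=1}^N E[Q_n(t)] ≤ B/ε, i.e., all queues are strongly stable. -/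

import Mathlib

open MeasureTheory Filter

/-- Lyapunov drift condition with ε > 0 implies all queues are strongly stable:
the time-averaged sum of expected queue lengths is asymptotically bounded by B/ε. -/
theorem lyapunov_drift_strongly_stable
    {Ω : Type*} {m0 : MeasurableSpace Ω} {μ : Measure Ω} [IsProbabilityMeasure μ]
    (ℱ : Filtration ℕ m0) (N : ℕ) (Q : Fin N → ℕ → Ω → ℝ)
    (hadapt : ∀ n, Adapted ℱ (fun t => Q n t))
    (hnonneg : ∀ n t ω, 0 ≤ Q n t ω)
    (hL2 : ∀ n t, MemLp (Q n t) 2 μ)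
    (L : ℕ → Ω → ℝ)
    (hL : ∀ t ω, L t ω = (1 / 2) * ∑ n, (Q n t ω) ^ 2)
    (B ε : ℝ) (hB : 0 ≤ B) (hε : 0 < ε)
    (hdrift : ∀ t : ℕ,
      ∀ᵐ ω ∂μ, (μ[fun ω' => L (t + 1) ω' - L t ω' | ℱ t]) ω
        ≤ B - ε * ∑ n, Q n t ω) :
    limsup (fun τ : ℕ => (1 / (τ : ℝ)) * ∑ t ∈ Finset.Icc 1 τ, ∑ n, ∫ ω, Q n t ω ∂μ)
      atTop ≤ B / ε := by
  -- integrability of the queues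
  have hQint : ∀ n t, Integrable (Q n t) μ := fun n t =>
    (hL2 n t).integrable one_le_two
  -- integrability of L
  have hLint : ∀ t, Integrable (L t) μ := by
    intro t
    have h : Integrable (fun ω => (1/2 : ℝ) * ∑ n, (Q n t ω) ^ 2) μ := by
      apply Integrable.const_mul
      exact integrable_finset_sum _ fun n _ => (hL2 n t).integrable_sq
    exact h.congr (Eventually.of_forall fun ω => (hL t ω).symm)
  have hLnn : ∀ t, 0 ≤ ∫ ω, L t ω ∂μ := by
    intro t
    apply integral_nonneg
    intro ω
    rw [hL t ω]
    positivity
  set f : ℕ → ℝ := fun t => ∫ ω, L t ω ∂μ with hf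
  set S : ℕ → ℝ := fun t => ∑ n, ∫ ω, Q n t ω ∂μ with hS
  have hSnn : ∀ t, 0 ≤ S t := fun t =>
    Finset.sum_nonneg fun n _ => integral_nonneg fun ω => hnonneg n t ω
  -- expectation of the drift condition
  have key : ∀ t, f (t + 1) - f t ≤ B - ε * S t := by
    intro t
    have hint : Integrable (fun ω => L (t + 1) ω - L t ω) μ :=
      (hLint (t + 1)).sub (hLint t)
    have hRint : Integrable (fun ω => B - ε * ∑ n, Q n t ω) μ := by
      apply (integrable_const B).sub
      exact (integrable_finset_sum _ fun n _ => hQint n t).const_mul ε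
    have h1 : ∫ ω, (μ[fun ω' => L (t + 1) ω' - L t ω' | ℱ t]) ω ∂μ
        = ∫ ω, (L (t + 1) ω - L t ω) ∂μ := integral_condExp (ℱ.le t)
    have h2 : ∫ ω, (μ[fun ω' => L (t + 1) ω' - L t ω' | ℱ t]) ω ∂μ
        ≤ ∫ ω, (B - ε * ∑ n, Q n t ω) ∂μ :=
      integral_mono_ae integrable_condExp hRint (hdrift t)
    have h3 : ∫ ω, (L (t + 1) ω - L t ω) ∂μ = f (t + 1) - f t :=
      integral_sub (hLint (t + 1)) (hLint t)
    have h4 : ∫ ω, (B - ε * ∑ n, Q n t ω) ∂μ = B - ε * S t := by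
      rw [integral_sub (integrable_const B)
        ((integrable_finset_sum _ fun n _ => hQint n t).const_mul ε),
        integral_const, integral_const_mul,
        integral_finset_sum _ fun n _ => hQint n t]
      simp [hS]
    rw [h1, h3] at h2
    rw [h4] at h2
    exact h2
  -- telescoping
  have tele : ∀ τ : ℕ, ε * ∑ t ∈ Finset.Icc 1 τ, S t ≤ τ * B + f 1 - f (τ + 1) := by
    intro τ
    induction τ with
    | zero => simp
    | succ τ ih =>
      rw [Finset.sum_Icc_succ_top (Nat.one_le_iff_ne_zero.2 (Nat.succ_ne_zero τ))]
      have := key (τ + 1)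
      push_cast
      nlinarith [hε.le]
  have tele' : ∀ τ : ℕ, ε * ∑ t ∈ Finset.Icc 1 τ, S t ≤ τ * B + f 1 := by
    intro τ
    have := tele τ
    have := hLnn (τ + 1)
    simp only [hf] at *
    linarith
  -- bound the Cesàro averages
  have hbound : ∀ τ : ℕ, 1 ≤ τ →
      (1 / (τ : ℝ)) * ∑ t ∈ Finset.Icc 1 τ, S t ≤ B / ε + (f 1 / ε) / τ := by
    intro τ hτ
    have hτpos : (0 : ℝ) < τ := by exact_mod_cast hτ
    have hs : ∑ t ∈ Finset.Icc 1 τ, S t ≤ (τ * B + f 1) / ε :=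
      (le_div_iff₀' hε).2 (tele' τ)
    calc (1 / (τ : ℝ)) * ∑ t ∈ Finset.Icc 1 τ, S t
        ≤ (1 / (τ : ℝ)) * ((τ * B + f 1) / ε) := by
          apply mul_le_mul_of_nonneg_left hs
          positivity
      _ = B / ε + (f 1 / ε) / τ := by
          field_simp
  -- pass to the limsup
  have hg : Tendsto (fun τ : ℕ => B / ε + (f 1 / ε) / τ) atTop (nhds (B / ε)) := by
    have : Tendsto (fun τ : ℕ => (f 1 / ε) / τ) atTop (nhds 0) :=
      Tendsto.div_atTop tendsto_const_nhds tendsto_natCast_atTop_atTop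
    simpa using tendsto_const_nhds.add this
  have hle : (fun τ : ℕ => (1 / (τ : ℝ)) * ∑ t ∈ Finset.Icc 1 τ, S t)
      ≤ᶠ[atTop] (fun τ : ℕ => B / ε + (f 1 / ε) / τ) := by
    filter_upwards [eventually_ge_atTop 1] with τ hτ using hbound τ hτ
  calc limsup (fun τ : ℕ => (1 / (τ : ℝ)) * ∑ t ∈ Finset.Icc 1 τ, S t) atTop
      ≤ limsup (fun τ : ℕ => B / ε + (f 1 / ε) / τ) atTop := by
        have h1 : IsCoboundedUnder (· ≤ ·) atTop
            (fun τ : ℕ => (1 / (τ : ℝ)) * ∑ t ∈ Finset.Icc 1 τ, S t) := by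
          apply isCoboundedUnder_le_of_le atTop (x := 0)
          intro τ
          exact mul_nonneg (by positivity) (Finset.sum_nonneg fun t _ => hSnn t)
        exact limsup_le_limsup hle h1 hg.isBoundedUnder_le
    _ = B / ε := hg.limsup_eq
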